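/- Let (X, d) be a pseudometric space and let v : X →₀ ℤ be a finitely supported integer-valued function on X whose coefficients sum to zero. Then for every integer n, D(n·v) = |n|·D(v), where D is the Graev seminorm. -/

import Mathlib

/-- The Graev seminorm on the free abelian group over a pseudometric space `X`:
`D v = inf { Σᵢ |cᵢ| · d(xᵢ, yᵢ) : v = Σᵢ cᵢ · (δ_{xᵢ} − δ_{yᵢ}), cᵢ ∈ ℤ }`. -/
noncomputable def graevSeminorm {X : Type*} [PseudoMetricSpace X] (v : X →₀ ℤ) : ℝ :=
  sInf { r : ℝ | ∃ (k : ℕ) (c : Fin k → ℤ) (x y : Fin k → X),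
    v = ∑ i, c i • (Finsupp.single (x i) (1 : ℤ) - Finsupp.single (y i) (1 : ℤ)) ∧
    r = ∑ i, |(c i : ℝ)| * dist (x i) (y i) }

namespace GraevAux

/-- Fin-indexed sum over a list equals mapped sum. -/
lemma fin_sum_list {α : Type*} {M : Type*} [AddCommMonoid M] (l : List α) (f : α → M) :
    ∑ i : Fin l.length, f (l.get i) = (l.map f).sum := by
  induction l with
  | nil => simp
  | cons a l ih =>
    rw [List.map_cons, List.sum_cons, ← ih]
    exact Fin.sum_univ_succ fun i => f ((a :: l).get i)

variable {X : Type*}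

lemma multiset_sum_fin {α M : Type*} [AddCommMonoid M] (F : Multiset α) (f : α → M) :
    (F.map f).sum = ∑ i : Fin F.toList.length, f (F.toList.get i) := by
  rw [fin_sum_list]
  conv_lhs => rw [← Multiset.coe_toList F]
  rw [Multiset.map_coe, Multiset.sum_coe]

/-- elementary difference. -/
noncomputable def phi (p : X × X) : X →₀ ℤ := Finsupp.single p.1 1 - Finsupp.single p.2 1

/-- divergence of a multiset of edges. -/
noncomputable def divm : Multiset (X × X) →+ (X →₀ ℤ) where
  toFun E := (E.map phi).sum
  map_zero' := by simp
  map_add' E F := by simp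

lemma divm_cons (p : X × X) (E : Multiset (X × X)) :
    divm (p ::ₘ E) = phi p + divm E := by
  show (Multiset.map phi (p ::ₘ E)).sum = phi p + (Multiset.map phi E).sum
  simp

lemma divm_singleton (p : X × X) : divm ({p} : Multiset (X × X)) = phi p := by
  show (Multiset.map phi ({p} : Multiset (X × X))).sum = phi p
  simp

section Metric
variable [PseudoMetricSpace X]

/-- cost of a multiset of edges. -/
noncomputable def cost : Multiset (X × X) →+ ℝ where
  toFun E := (E.map (fun p => dist p.1 p.2)).sum
  map_zero' := by simp
  map_add' E F := by simp

lemma cost_cons (p : X × X) (E : Multiset (X × X)) :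
    cost (p ::ₘ E) = dist p.1 p.2 + cost E := by
  show (Multiset.map (fun p : X × X => dist p.1 p.2) (p ::ₘ E)).sum
    = dist p.1 p.2 + (Multiset.map (fun p : X × X => dist p.1 p.2) E).sum
  simp

lemma cost_singleton (p : X × X) : cost ({p} : Multiset (X × X)) = dist p.1 p.2 := by
  show (Multiset.map (fun p : X × X => dist p.1 p.2) ({p} : Multiset (X × X))).sum = dist p.1 p.2
  simp

lemma cost_nonneg (E : Multiset (X × X)) : 0 ≤ cost E := by
  induction E using Multiset.induction with
  | empty => simp [cost]
  | cons p E ih => rw [cost_cons]; positivity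

/-- the defining set of the Graev seminorm. -/
def gset (v : X →₀ ℤ) : Set ℝ :=
  { r : ℝ | ∃ (k : ℕ) (c : Fin k → ℤ) (x y : Fin k → X),
    v = ∑ i, c i • (Finsupp.single (x i) (1 : ℤ) - Finsupp.single (y i) (1 : ℤ)) ∧
    r = ∑ i, |(c i : ℝ)| * dist (x i) (y i) }

lemma graev_eq (v : X →₀ ℤ) : graevSeminorm v = sInf (gset v) := rfl

lemma gset_nonneg {v : X →₀ ℤ} {r : ℝ} (hr : r ∈ gset v) : 0 ≤ r := by
  obtain ⟨k, c, x, y, -, rfl⟩ := hr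
  exact Finset.sum_nonneg fun i _ => mul_nonneg (abs_nonneg _) dist_nonneg

lemma gset_bddBelow (v : X →₀ ℤ) : BddBelow (gset v) :=
  ⟨0, fun r hr => gset_nonneg hr⟩

/-- multiset to representation: the cost of any subflow is in the set of its divergence. -/
lemma cost_mem_gset (F : Multiset (X × X)) : cost F ∈ gset (divm F) := by
  refine ⟨F.toList.length, fun _ => 1, fun i => (F.toList.get i).1, fun i => (F.toList.get i).2,
    ?_, ?_⟩
  · show (F.map phi).sum = _
    rw [multiset_sum_fin F phi]
    exact Finset.sum_congr rfl fun i _ => by rw [one_smul]; rfl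
  · show (F.map (fun p => dist p.1 p.2)).sum = _
    rw [multiset_sum_fin F (fun p => dist p.1 p.2)]
    simp

lemma graev_le_cost {v : X →₀ ℤ} {F : Multiset (X × X)} (h : divm F = v) :
    graevSeminorm v ≤ cost F := by
  rw [graev_eq]
  exact csInf_le (gset_bddBelow v) (h ▸ cost_mem_gset F)

/-- representation to multiset. -/
lemma exists_multiset_of_mem {v : X →₀ ℤ} {r : ℝ} (hr : r ∈ gset v) :
    ∃ E : Multiset (X × X), divm E = v ∧ cost E = r := by
  obtain ⟨k, c, x, y, hv, hr⟩ := hr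
  refine ⟨∑ i : Fin k, (c i).natAbs • ({if 0 ≤ c i then (x i, y i) else (y i, x i)} : Multiset (X × X)), ?_, ?_⟩
  · rw [map_sum, hv]
    refine Finset.sum_congr rfl fun i _ => ?_
    rw [map_nsmul, divm_singleton]
    by_cases hc : 0 ≤ c i
    · simp only [hc, if_pos]
      rw [← natCast_zsmul, Int.natAbs_of_nonneg hc]
      rfl
    · simp only [hc, if_neg, not_false_iff]
      rw [← natCast_zsmul]
      have h1 : ((c i).natAbs : ℤ) = -(c i) := by omega
      have h2 : phi (y i, x i) = -(Finsupp.single (x i) (1:ℤ) - Finsupp.single (y i) (1:ℤ)) := by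
        simp only [phi, neg_sub]
      rw [h1, h2, smul_neg, neg_zsmul, neg_neg]
  · rw [map_sum, hr]
    refine Finset.sum_congr rfl fun i _ => ?_
    rw [map_nsmul, cost_singleton, nsmul_eq_mul]
    have habs : ((c i).natAbs : ℝ) = |(c i : ℝ)| := by
      rw [Nat.cast_natAbs]; rw [Int.cast_abs]
    by_cases hc : 0 ≤ c i
    · simp [hc, habs]
    · simp only [hc, if_neg, not_false_iff]
      rw [habs, dist_comm]

/-- nonemptiness of the representation set for sum-zero `v`. -/
lemma gset_nonempty {v : X →₀ ℤ} (hv : v.sum (fun _ c => c) = 0) : (gset v).Nonempty := by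
  by_cases h0 : v = 0
  · exact ⟨0, 0, fun i => i.elim0, fun i => i.elim0, fun i => i.elim0, by simp [h0], by simp⟩
  · obtain ⟨b, hb⟩ := Finsupp.support_nonempty_iff.mpr h0
    set l := v.support.toList with hl
    refine ⟨_, l.length, fun i => v (l.get i), fun i => l.get i, fun _ => b, ?_, rfl⟩
    have h1 : ∑ i : Fin l.length, v (l.get i) • (Finsupp.single (l.get i) (1:ℤ)) = v := by
      rw [fin_sum_list l (fun a => v a • Finsupp.single a (1:ℤ))]
      have : ∀ a, v a • Finsupp.single a (1:ℤ) = Finsupp.single a (v a) := by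
        intro a; rw [Finsupp.smul_single]; simp
      simp_rw [this]
      rw [hl, Finset.sum_map_toList]
      exact Finsupp.sum_single v
    have h2 : ∑ i : Fin l.length, v (l.get i) • (Finsupp.single b (1:ℤ)) = 0 := by
      rw [← Finset.sum_smul]
      have : ∑ i : Fin l.length, v (l.get i) = 0 := by
        rw [fin_sum_list l (fun a => v a), hl, Finset.sum_map_toList]
        exact hv
      rw [this, zero_smul]
    calc v = v - 0 := by rw [sub_zero]
    _ = ∑ i : Fin l.length, v (l.get i) • (Finsupp.single (l.get i) (1:ℤ))
        - ∑ i : Fin l.length, v (l.get i) • (Finsupp.single b (1:ℤ)) := by rw [h1, h2]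
    _ = _ := by rw [← Finset.sum_sub_distrib]; exact Finset.sum_congr rfl fun i _ => by rw [smul_sub]

/-- scaling memberships. -/
lemma smul_mem_gset {v : X →₀ ℤ} {r : ℝ} (hr : r ∈ gset v) (n : ℤ) :
    |(n : ℝ)| * r ∈ gset (n • v) := by
  obtain ⟨k, c, x, y, hv, hr⟩ := hr
  refine ⟨k, fun i => n * c i, x, y, ?_, ?_⟩
  · rw [hv, Finset.smul_sum]
    exact Finset.sum_congr rfl fun i _ => by rw [smul_smul]
  · rw [hr, Finset.mul_sum]
    refine Finset.sum_congr rfl fun i _ => ?_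
    push_cast
    rw [abs_mul, mul_assoc]

lemma gset_neg_subset (v : X →₀ ℤ) : gset v ⊆ gset (-v) := by
  rintro r ⟨k, c, x, y, hv, hr⟩
  refine ⟨k, c, y, x, ?_, ?_⟩
  · rw [hv, ← Finset.sum_neg_distrib]
    exact Finset.sum_congr rfl fun i _ => by rw [← smul_neg, neg_sub]
  · rw [hr]
    exact Finset.sum_congr rfl fun i _ => by rw [dist_comm]

lemma gset_neg (v : X →₀ ℤ) : gset (-v) = gset v := by
  refine le_antisymm ?_ (gset_neg_subset v)
  have := gset_neg_subset (-v)
  rwa [neg_neg] at this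

end Metric

section Split
variable [DecidableEq X]

/-- number of edges leaving `S`. -/
def out (E : Multiset (X × X)) (S : Finset X) : ℤ :=
  (E.map (fun p => if p.1 ∈ S ∧ p.2 ∉ S then (1:ℤ) else 0)).sum

def inn (E : Multiset (X × X)) (S : Finset X) : ℤ :=
  (E.map (fun p => if p.2 ∈ S ∧ p.1 ∉ S then (1:ℤ) else 0)).sum

lemma out_cons (p : X × X) (E : Multiset (X × X)) (S : Finset X) :
    out (p ::ₘ E) S = (if p.1 ∈ S ∧ p.2 ∉ S then (1:ℤ) else 0) + out E S := by
  simp [out]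

lemma inn_cons (p : X × X) (E : Multiset (X × X)) (S : Finset X) :
    inn (p ::ₘ E) S = (if p.2 ∈ S ∧ p.1 ∉ S then (1:ℤ) else 0) + inn E S := by
  simp [inn]

lemma out_nonneg (E : Multiset (X × X)) (S : Finset X) : 0 ≤ out E S := by
  induction E using Multiset.induction with
  | empty => simp [out]
  | cons p E ih => rw [out_cons]; have : (0:ℤ) ≤ if p.1 ∈ S ∧ p.2 ∉ S then (1:ℤ) else 0 := by positivity
                   linarith

lemma inn_nonneg (E : Multiset (X × X)) (S : Finset X) : 0 ≤ inn E S := by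
  induction E using Multiset.induction with
  | empty => simp [inn]
  | cons p E ih => rw [inn_cons]; have : (0:ℤ) ≤ if p.2 ∈ S ∧ p.1 ∉ S then (1:ℤ) else 0 := by positivity
                   linarith

lemma sum_single_indicator (w : X) (S : Finset X) :
    ∑ a ∈ S, (Finsupp.single w (1:ℤ)) a = if w ∈ S then 1 else 0 := by
  simp [Finsupp.single_apply]

/-- balance: the divergence summed over `S` equals out minus in. -/
lemma balance (E : Multiset (X × X)) (S : Finset X) :
    ∑ a ∈ S, divm E a = out E S - inn E S := by
  induction E using Multiset.induction with
  | empty => simp [out, inn]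
  | cons p E ih =>
    rw [divm_cons, out_cons, inn_cons]
    have h1 : ∑ a ∈ S, (phi p + divm E) a = (∑ a ∈ S, phi p a) + ∑ a ∈ S, divm E a := by
      simp [Finsupp.add_apply, Finset.sum_add_distrib]
    have h2 : ∑ a ∈ S, phi p a
        = (if p.1 ∈ S then (1:ℤ) else 0) - (if p.2 ∈ S then (1:ℤ) else 0) := by
      simp [phi, Finsupp.sub_apply, Finset.sum_sub_distrib, sum_single_indicator]
    rw [h1, h2, ih]
    by_cases h3 : p.1 ∈ S <;> by_cases h4 : p.2 ∈ S <;> simp [h3, h4] <;> ring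

/-- submodularity of out. -/
lemma out_submod (E : Multiset (X × X)) (A B : Finset X) :
    out E (A ∪ B) + out E (A ∩ B) ≤ out E A + out E B := by
  induction E using Multiset.induction with
  | empty => simp [out]
  | cons p E ih =>
    simp only [out_cons]
    have key : (if p.1 ∈ A ∪ B ∧ p.2 ∉ A ∪ B then (1:ℤ) else 0)
        + (if p.1 ∈ A ∩ B ∧ p.2 ∉ A ∩ B then (1:ℤ) else 0)
        ≤ (if p.1 ∈ A ∧ p.2 ∉ A then (1:ℤ) else 0) + (if p.1 ∈ B ∧ p.2 ∉ B then (1:ℤ) else 0) := by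
      by_cases h1 : p.1 ∈ A <;> by_cases h2 : p.1 ∈ B <;>
        by_cases h3 : p.2 ∈ A <;> by_cases h4 : p.2 ∈ B <;>
        simp [h1, h2, h3, h4, Finset.mem_union, Finset.mem_inter]
    linarith

lemma eq_zero_of_nonpos {V : Finset X} {v : X →₀ ℤ} (hsupp : v.support ⊆ V)
    (hsum : ∑ a ∈ V, v a = 0) (hle : ∀ a ∈ V, v a ≤ 0) : v = 0 := by
  have hall := (Finset.sum_eq_zero_iff_of_nonpos hle).mp hsum
  ext a
  by_cases ha : a ∈ V
  · exact hall a ha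
  · by_contra h
    exact ha (hsupp (Finsupp.mem_support_iff.mpr h))

/-- Main splitting lemma. -/
lemma split (V : Finset X) :
    ∀ (N : ℕ) (E : Multiset (X × X)) (v : X →₀ ℤ),
      Multiset.card E ≤ N →
      (∀ p ∈ E, p.1 ∈ V ∧ p.2 ∈ V) →
      v.support ⊆ V →
      (∑ a ∈ V, v a = 0) →
      (∀ S ⊆ V, (∑ a ∈ S, v a) ≤ out E S) →
      ∃ F, F ≤ E ∧ divm F = v := by
  intro N
  induction N with
  | zero =>
    intro E v hcard hEnd hsupp hsum hC
    have hE : E = 0 := by simpa using Multiset.card_eq_zero.mp (Nat.le_zero.mp hcard)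
    refine ⟨0, Multiset.zero_le E, ?_⟩
    have hv : v = 0 := by
      refine eq_zero_of_nonpos hsupp hsum fun a ha => ?_
      have := hC {a} (Finset.singleton_subset_iff.mpr ha)
      simpa [hE, out] using this
    simp [hv]
  | succ N ih =>
    intro E v hcard hEnd hsupp hsum hC
    by_cases hex : ∃ x ∈ V, 0 < v x
    · obtain ⟨x, hxV, hx⟩ := hex
      classical
      set P : Finset X → Prop := fun S => S ⊆ V ∧ x ∉ S ∧ out E S ≤ ∑ a ∈ S, v a with hP
      have hPempty : P ∅ := by
        refine ⟨Finset.empty_subset V, Finset.notMem_empty x, ?_⟩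
        simp [out]
      have hPunion : ∀ S₁, P S₁ → ∀ S₂, P S₂ → P (S₁ ⊔ S₂) := by
        intro S₁ h₁ S₂ h₂
        refine ⟨Finset.union_subset h₁.1 h₂.1, ?_, ?_⟩
        · simp only [Finset.sup_eq_union, Finset.mem_union]
          rintro (h | h)
          exacts [h₁.2.1 h, h₂.2.1 h]
        · have hsub := out_submod E S₁ S₂
          have hCint := hC (S₁ ∩ S₂) ((Finset.inter_subset_left).trans h₁.1)
          have hsu : ∑ a ∈ S₁ ∪ S₂, v a + ∑ a ∈ S₁ ∩ S₂, v a = ∑ a ∈ S₁, v a + ∑ a ∈ S₂, v a :=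
            Finset.sum_union_inter
          have := h₁.2.2
          have := h₂.2.2
          simp only [Finset.sup_eq_union]
          linarith
      haveI : DecidablePred P := Classical.decPred P
      set Sstar := (V.powerset.filter P).sup id with hSs
      have hPS : P Sstar := by
        refine Finset.sup_induction hPempty hPunion fun S hS => ?_
        exact (Finset.mem_filter.mp hS).2
      have hmax : ∀ S, P S → S ⊆ Sstar := by
        intro S hS
        exact Finset.le_sup (f := id)
          (Finset.mem_filter.mpr ⟨Finset.mem_powerset.mpr hS.1, hS⟩)
      -- find an edge out of x avoiding Sstar
      have hedge : ∃ p ∈ E, p.1 = x ∧ p.2 ∉ insert x Sstar := by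
        by_contra h
        push_neg at h
        have h1 : out E (insert x Sstar) ≤ out E Sstar := by
          refine Multiset.sum_map_le_sum_map _ _ fun q hq => ?_
          by_cases hq1 : q.1 = x
          · have hin := h q hq hq1
            have hneg : ¬(q.1 ∈ insert x Sstar ∧ q.2 ∉ insert x Sstar) := fun hh => hh.2 hin
            rw [if_neg hneg]
            split_ifs <;> norm_num
          · have himp : (q.1 ∈ insert x Sstar ∧ q.2 ∉ insert x Sstar) →
                (q.1 ∈ Sstar ∧ q.2 ∉ Sstar) := by
              rintro ⟨h1, h2⟩
              exact ⟨(Finset.mem_insert.mp h1).resolve_left hq1,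
                fun hc => h2 (Finset.mem_insert_of_mem hc)⟩
            by_cases ha : q.1 ∈ insert x Sstar ∧ q.2 ∉ insert x Sstar
            · rw [if_pos ha, if_pos (himp ha)]
            · rw [if_neg ha]
              split_ifs <;> norm_num
        have h2 := hC (insert x Sstar) (Finset.insert_subset hxV hPS.1)
        have h3 : out E Sstar ≤ ∑ a ∈ Sstar, v a := hPS.2.2
        rw [Finset.sum_insert hPS.2.1] at h2
        linarith
      obtain ⟨p, hpE, hp1, hp2⟩ := hedge
      have hyx : p.2 ≠ x := fun h => hp2 (by rw [h]; exact Finset.mem_insert_self x _)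
      have hyS' : p.2 ∉ Sstar := fun h => hp2 (Finset.mem_insert_of_mem h)
      have hyV : p.2 ∈ V := (hEnd p hpE).2
      -- set up the reduced problem
      set y := p.2 with hy
      set E' := E.erase p with hE'
      set v' := v - Finsupp.single x 1 + Finsupp.single y 1 with hv'
      have hcons : p ::ₘ E' = E := Multiset.cons_erase hpE
      have hsumS : ∀ S : Finset X, ∑ a ∈ S, v' a
          = ∑ a ∈ S, v a - (if x ∈ S then 1 else 0) + (if y ∈ S then 1 else 0) := by
        intro S
        rw [hv']
        simp only [Finsupp.add_apply, Finsupp.sub_apply]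
        rw [Finset.sum_add_distrib, Finset.sum_sub_distrib,
          sum_single_indicator, sum_single_indicator]
      have houtE : ∀ S : Finset X, out E S
          = (if x ∈ S ∧ y ∉ S then (1:ℤ) else 0) + out E' S := by
        intro S
        conv_lhs => rw [← hcons]
        rw [out_cons, hp1]
      have hcard' : Multiset.card E' ≤ N := by
        rw [hE', Multiset.card_erase_of_mem hpE]
        exact Nat.pred_le_pred hcard
      have hEnd' : ∀ q ∈ E', q.1 ∈ V ∧ q.2 ∈ V :=
        fun q hq => hEnd q (Multiset.mem_of_le (Multiset.erase_le p E) hq)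
      have hsupp' : v'.support ⊆ V := by
        intro a ha
        by_contra haV
        have hva : v a = 0 := by
          by_contra h'
          exact haV (hsupp (Finsupp.mem_support_iff.mpr h'))
        have hax : x ≠ a := fun h' => haV (h' ▸ hxV)
        have hay : y ≠ a := fun h' => haV (h' ▸ hyV)
        have : v' a = 0 := by
          rw [hv']
          simp [Finsupp.single_apply, hax, hay, hva]
        exact (Finsupp.mem_support_iff.mp ha) this
      have hsum' : ∑ a ∈ V, v' a = 0 := by
        rw [hsumS V, if_pos hxV, if_pos hyV, hsum]
        ring
      have hC' : ∀ S ⊆ V, (∑ a ∈ S, v' a) ≤ out E' S := by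
        intro S hSV
        have hCS := hC S hSV
        rw [hsumS S]
        rw [houtE S] at hCS
        by_cases hxS : x ∈ S <;> by_cases hyS : y ∈ S
        · rw [if_pos hxS, if_pos hyS]
          rw [if_neg (by simp [hyS] : ¬(x ∈ S ∧ y ∉ S))] at hCS
          linarith
        · rw [if_pos hxS, if_neg hyS]
          rw [if_pos ⟨hxS, hyS⟩] at hCS
          linarith
        · rw [if_neg hxS, if_pos hyS]
          rw [if_neg (by simp [hxS] : ¬(x ∈ S ∧ y ∉ S))] at hCS
          have htight : ¬ (out E S ≤ ∑ a ∈ S, v a) := by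
            intro hT
            exact hyS' (hmax S ⟨hSV, hxS, hT⟩ hyS)
          rw [houtE S, if_neg (by simp [hxS] : ¬(x ∈ S ∧ y ∉ S))] at htight
          push_neg at htight
          linarith
        · rw [if_neg hxS, if_neg hyS]
          rw [if_neg (by simp [hxS] : ¬(x ∈ S ∧ y ∉ S))] at hCS
          linarith
      obtain ⟨F', hF'le, hF'div⟩ := ih E' v' hcard' hEnd' hsupp' hsum' hC'
      refine ⟨p ::ₘ F', ?_, ?_⟩
      · calc p ::ₘ F' ≤ p ::ₘ E' := Multiset.cons_le_cons p hF'le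
        _ = E := hcons
      · rw [divm_cons, hF'div, hv', phi, hp1, ← hy]
        abel
    · push_neg at hex
      have hv : v = 0 := eq_zero_of_nonpos hsupp hsum fun a ha => hex a ha
      exact ⟨0, Multiset.zero_le E, by simp [hv]⟩

/-- Key inequality: if the divergence of `E` is `m • v` then `m * D v ≤ cost E`. -/
lemma key [PseudoMetricSpace X] (v : X →₀ ℤ) (hv : v.sum (fun _ c => c) = 0) :
    ∀ (m : ℕ) (E : Multiset (X × X)), divm E = ((m : ℤ)) • v →
      (m : ℝ) * graevSeminorm v ≤ cost E := by
  intro m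
  induction m with
  | zero => intro E _; simpa using cost_nonneg E
  | succ m ih =>
    intro E hE
    set V := v.support ∪ (E.map Prod.fst).toFinset ∪ (E.map Prod.snd).toFinset with hV
    have hsuppV : v.support ⊆ V :=
      Finset.Subset.trans Finset.subset_union_left Finset.subset_union_left
    have hEnd : ∀ p ∈ E, p.1 ∈ V ∧ p.2 ∈ V := by
      intro p hp
      constructor
      · exact Finset.mem_union_left _ (Finset.mem_union_right _
          (Multiset.mem_toFinset.mpr (Multiset.mem_map_of_mem _ hp)))
      · exact Finset.mem_union_right _
          (Multiset.mem_toFinset.mpr (Multiset.mem_map_of_mem _ hp))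
    have hsumV : ∑ a ∈ V, v a = 0 := by
      rw [← Finset.sum_subset hsuppV (fun a _ ha => Finsupp.notMem_support_iff.mp ha)]
      rw [Finsupp.sum] at hv
      exact hv
    have hC : ∀ S ⊆ V, (∑ a ∈ S, v a) ≤ out E S := by
      intro S _
      have hb2 : out E S - inn E S = ((m:ℤ)+1) * ∑ a ∈ S, v a := by
        rw [← balance E S, hE]
        simp only [Finsupp.smul_apply, smul_eq_mul]
        rw [← Finset.mul_sum]
        push_cast
        ring
      have hinn := inn_nonneg E S
      have hout := out_nonneg E S
      rcases le_or_gt 0 (∑ a ∈ S, v a) with hs | hs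
      · have hexp : ((m:ℤ)+1) * (∑ a ∈ S, v a)
            = (m:ℤ) * (∑ a ∈ S, v a) + ∑ a ∈ S, v a := by ring
        have hprod : 0 ≤ (m:ℤ) * (∑ a ∈ S, v a) :=
          mul_nonneg (by positivity) hs
        linarith
      · linarith
    obtain ⟨F, hFle, hFdiv⟩ := split V (Multiset.card E) E v le_rfl hEnd hsuppV hsumV hC
    have hE2 : F + (E - F) = E := by rw [add_comm]; exact tsub_add_cancel_of_le hFle
    have hdivrest : divm (E - F) = ((m : ℤ)) • v := by
      have hsum2 : divm F + divm (E - F) = divm E := by rw [← map_add, hE2]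
      rw [hFdiv, hE] at hsum2
      have h4 : divm (E - F) = (((m:ℕ)+1 : ℤ)) • v - v := by
        push_cast at hsum2
        exact eq_sub_of_add_eq' hsum2
      rw [h4, add_smul, one_smul]
      abel
    have h1 := graev_le_cost hFdiv
    have h2 := ih (E - F) hdivrest
    have h3 : cost E = cost F + cost (E - F) := by rw [← map_add, hE2]
    have hexp : (((m:ℕ)+1 : ℝ)) * graevSeminorm v
        = (m:ℝ) * graevSeminorm v + graevSeminorm v := by ring
    push_cast
    linarith

end Split
end GraevAux

/-- The Graev seminorm is absolutely homogeneous with respect to integer multiples: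
`D(n • v) = |n| · D(v)` for every `v` with coefficient sum zero. -/
theorem graevSeminorm_zsmul {X : Type*} [PseudoMetricSpace X] (v : X →₀ ℤ)
    (hv : v.sum (fun _ c => c) = 0) (n : ℤ) :
    graevSeminorm (n • v) = |(n : ℝ)| * graevSeminorm v := by
  classical
  by_cases hn : n = 0
  · subst hn
    rw [zero_smul]
    have h0 : (0:ℝ) ∈ GraevAux.gset (0 : X →₀ ℤ) :=
      ⟨0, fun i => i.elim0, fun i => i.elim0, fun i => i.elim0, by simp, by simp⟩
    have : graevSeminorm (0 : X →₀ ℤ) = 0 := by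
      rw [GraevAux.graev_eq]
      exact le_antisymm (csInf_le (GraevAux.gset_bddBelow 0) h0)
        (le_csInf ⟨0, h0⟩ fun r hr => GraevAux.gset_nonneg hr)
    rw [this]
    simp
  · have hne : (GraevAux.gset v).Nonempty := GraevAux.gset_nonempty hv
    have habs : (0:ℝ) < |(n:ℝ)| := abs_pos.mpr (by exact_mod_cast hn)
    have hne2 : (GraevAux.gset (n • v)).Nonempty := by
      obtain ⟨r0, hr0⟩ := hne
      exact ⟨_, GraevAux.smul_mem_gset hr0 n⟩
    refine le_antisymm ?_ ?_
    · -- D(n v) ≤ |n| D v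
      rw [GraevAux.graev_eq, GraevAux.graev_eq]
      have hlow : ∀ r ∈ GraevAux.gset v,
          sInf (GraevAux.gset (n • v)) ≤ |(n:ℝ)| * r := fun r hr =>
        csInf_le (GraevAux.gset_bddBelow _) (GraevAux.smul_mem_gset hr n)
      have h2 : sInf (GraevAux.gset (n • v)) / |(n:ℝ)| ≤ sInf (GraevAux.gset v) :=
        le_csInf hne fun r hr => (div_le_iff₀ habs).mpr
          (by rw [mul_comm]; exact hlow r hr)
      calc sInf (GraevAux.gset (n • v))
          = sInf (GraevAux.gset (n • v)) / |(n:ℝ)| * |(n:ℝ)| := by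
            field_simp
        _ ≤ sInf (GraevAux.gset v) * |(n:ℝ)| := by
            exact mul_le_mul_of_nonneg_right h2 (le_of_lt habs)
        _ = |(n:ℝ)| * sInf (GraevAux.gset v) := mul_comm _ _
    · -- |n| D v ≤ D(n v)
      rw [GraevAux.graev_eq (n • v)]
      refine le_csInf hne2 fun r hr => ?_
      obtain ⟨E, hEdiv, hEcost⟩ := GraevAux.exists_multiset_of_mem hr
      have hcNat : ((n.natAbs : ℝ)) = |(n:ℝ)| := by
        rw [Nat.cast_natAbs, Int.cast_abs]
      rcases le_or_gt 0 n with hn0 | hn0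
      · have hmn : ((n.natAbs : ℤ)) = n := Int.natAbs_of_nonneg hn0
        have hk := GraevAux.key v hv n.natAbs E (by rw [hmn]; exact hEdiv)
        calc |(n:ℝ)| * graevSeminorm v = (n.natAbs : ℝ) * graevSeminorm v := by rw [hcNat]
          _ ≤ GraevAux.cost E := hk
          _ = r := hEcost
      · have hmn : ((n.natAbs : ℤ)) = -n := by omega
        have hdiv2 : GraevAux.divm E = ((n.natAbs : ℤ)) • (-v) := by
          rw [hmn, hEdiv, neg_smul_neg]
        have hv2 : (-v).sum (fun _ c => c) = 0 := by
          have hneg : ((-v).sum fun _ c => c) = -(v.sum fun _ c => c) := by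
            rw [Finsupp.sum, Finsupp.sum, Finsupp.support_neg]
            simp
          rw [hneg, hv, neg_zero]
        have hk := GraevAux.key (-v) hv2 n.natAbs E hdiv2
        have hDneg : graevSeminorm (-v) = graevSeminorm v := by
          rw [GraevAux.graev_eq, GraevAux.graev_eq, GraevAux.gset_neg]
        calc |(n:ℝ)| * graevSeminorm v = (n.natAbs : ℝ) * graevSeminorm (-v) := by
              rw [hcNat, hDneg]
          _ ≤ GraevAux.cost E := hk
          _ = r := hEcost
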